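/- For an index (k_1,…,k_r) with k_1+⋯+k_r even, one has I_2(k_1,…,k_r) + {}_1I_1(k_1,…,k_r) + I_2(k_r,…,k_1) = σ_2(I_0(k_1,…,k_r)) in 𝓘. -/

import Mathlib

/-- Indices: finite sequences of positive integers (modeled as lists of naturals). -/
abbrev Idx := List ℕ

/-- The ℚ-vector space 𝓘 on the set of indices. -/
abbrev Ical := Idx →₀ ℚ

/-- Auxiliary harmonic product on reversed lists (cons = append at the end). -/
noncomputable def harmAux : Idx → Idx → Ical
  | [], l => Finsupp.single l 1
  | a :: k, [] => Finsupp.single (a :: k) 1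
  | a :: k, b :: l =>
      Finsupp.mapDomain (a :: ·) (harmAux k (b :: l)) +
      Finsupp.mapDomain (b :: ·) (harmAux (a :: k) l) +
      Finsupp.mapDomain ((a + b) :: ·) (harmAux k l)
termination_by k l => k.length + l.length

/-- The harmonic (stuffle) product of two indices. -/
noncomputable def harm (k l : Idx) : Ical :=
  Finsupp.mapDomain List.reverse (harmAux k.reverse l.reverse)

/-- Bilinear extension of the harmonic product to 𝓘. -/
noncomputable def harmF (x y : Ical) : Ical :=
  x.sum fun k c => y.sum fun l d => (c * d) • harm k l

/-- The map σₙ on indices. -/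
noncomputable def sigma : ℕ → Idx → Ical
  | n, [] => if n = 0 then Finsupp.single [] 1 else 0
  | n, k :: ks =>
      ∑ a ∈ Finset.range (n + 1),
        ((k + a - 1).choose a : ℚ) •
          Finsupp.mapDomain (fun t => (k + a) :: t) (sigma (n - a) ks)

/-- Linear extension of σₙ to 𝓘. -/
noncomputable def sigmaL (n : ℕ) (x : Ical) : Ical :=
  x.sum fun k c => c • sigma n k

/-- The map ₘIₙ on indices. -/
noncomputable def mI (m n : ℕ) (ks : Idx) : Ical :=
  ∑ i ∈ Finset.range (ks.length + 1),
    ((-1 : ℚ)) ^ ((ks.drop i).sum) •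
      harmF (sigma m (ks.take i)) (sigma n ((ks.drop i).reverse))

/-- The index shuffle product ⧢̃ of two indices. -/
noncomputable def sh : Idx → Idx → Ical
  | [], l => Finsupp.single l 1
  | a :: k, [] => Finsupp.single (a :: k) 1
  | a :: k, b :: l =>
      Finsupp.mapDomain (a :: ·) (sh k (b :: l)) +
      Finsupp.mapDomain (b :: ·) (sh (a :: k) l)
termination_by k l => k.length + l.length

/-- The multiple zeta value of an index. -/
noncomputable def mzv (ks : List ℕ) : ℝ :=
  ∑' f : {f : Fin ks.length → ℕ // StrictMono f ∧ ∀ i, 0 < f i},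
    ∏ i, (1 / (f.1 i : ℝ) ^ ks.get i)

/-! ### Auxiliary linear-algebra setup -/

open Finsupp

set_option maxHeartbeats 1000000

noncomputable def consL (c : ℕ) : Ical →ₗ[ℚ] Ical := Finsupp.lmapDomain ℚ ℚ (c :: ·)
noncomputable def snocL (c : ℕ) : Ical →ₗ[ℚ] Ical :=
  Finsupp.lmapDomain ℚ ℚ (fun t => t ++ [c])
noncomputable def revL : Ical →ₗ[ℚ] Ical := Finsupp.lmapDomain ℚ ℚ List.reverse
noncomputable def sigL (n : ℕ) : Ical →ₗ[ℚ] Ical :=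
  Finsupp.lsum ℚ fun k => LinearMap.toSpanSingleton ℚ Ical (sigma n k)
noncomputable def harmAuxL : Ical →ₗ[ℚ] Ical →ₗ[ℚ] Ical :=
  Finsupp.lsum ℚ fun k => LinearMap.toSpanSingleton ℚ (Ical →ₗ[ℚ] Ical)
    (Finsupp.lsum ℚ fun l => LinearMap.toSpanSingleton ℚ Ical (harmAux k l))
noncomputable def harmBL : Ical →ₗ[ℚ] Ical →ₗ[ℚ] Ical :=
  Finsupp.lsum ℚ fun k => LinearMap.toSpanSingleton ℚ (Ical →ₗ[ℚ] Ical)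
    (Finsupp.lsum ℚ fun l => LinearMap.toSpanSingleton ℚ Ical (harm k l))

@[simp] lemma consL_single (c : ℕ) (t : Idx) (d : ℚ) :
    consL c (Finsupp.single t d) = Finsupp.single (c :: t) d := by
  simp [consL]

@[simp] lemma snocL_single (c : ℕ) (t : Idx) (d : ℚ) :
    snocL c (Finsupp.single t d) = Finsupp.single (t ++ [c]) d := by
  simp [snocL]

@[simp] lemma revL_single (t : Idx) (d : ℚ) :
    revL (Finsupp.single t d) = Finsupp.single t.reverse d := by
  simp [revL]

@[simp] lemma sigL_single (n : ℕ) (t : Idx) (d : ℚ) :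
    sigL n (Finsupp.single t d) = d • sigma n t := by
  simp [sigL, LinearMap.toSpanSingleton_apply]

@[simp] lemma harmAuxL_single (k l : Idx) (c d : ℚ) :
    harmAuxL (Finsupp.single k c) (Finsupp.single l d) = c • d • harmAux k l := by
  simp [harmAuxL, LinearMap.toSpanSingleton_apply]

@[simp] lemma harmBL_single (k l : Idx) (c d : ℚ) :
    harmBL (Finsupp.single k c) (Finsupp.single l d) = c • d • harm k l := by
  simp [harmBL, LinearMap.toSpanSingleton_apply]

/-! ### Basic facts about σ -/

lemma sigma_nil (n : ℕ) :
    sigma n [] = if n = 0 then Finsupp.single [] 1 else 0 := by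
  simp [sigma]

lemma sigma_cons (n c : ℕ) (t : Idx) :
    sigma n (c :: t)
      = ∑ j ∈ Finset.range (n + 1),
          ((c + j - 1).choose j : ℚ) • consL (c + j) (sigma (n - j) t) := by
  rw [sigma]
  simp [consL]

@[simp] lemma sigma_zero (t : Idx) : sigma 0 t = Finsupp.single t 1 := by
  induction t with
  | nil => simp [sigma_nil]
  | cons c t ih => rw [sigma_cons]; simp [ih]

lemma sigma_zero_cons (c : ℕ) (t : Idx) :
    sigma 0 (c :: t) = consL c (sigma 0 t) := by
  simp

lemma sigma_one_cons (c : ℕ) (t : Idx) :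
    sigma 1 (c :: t) = consL c (sigma 1 t) + (c : ℚ) • consL (c + 1) (sigma 0 t) := by
  rw [sigma_cons]
  simp [Finset.sum_range_succ]

lemma sigma_two_cons (c : ℕ) (t : Idx) :
    sigma 2 (c :: t) = consL c (sigma 2 t) + (c : ℚ) • consL (c + 1) (sigma 1 t)
      + (((c + 1).choose 2 : ℕ) : ℚ) • consL (c + 2) (sigma 0 t) := by
  rw [sigma_cons]
  simp [Finset.sum_range_succ, show c + 2 - 1 = c + 1 from rfl]

lemma sigL_zero (x : Ical) : sigL 0 x = x := by
  induction x using Finsupp.induction_linear with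
  | zero => simp
  | add f g hf hg => simp [hf, hg]
  | single t d => simp [Finsupp.smul_single']

lemma sigL_one_consL (c : ℕ) (x : Ical) :
    sigL 1 (consL c x) = consL c (sigL 1 x) + (c : ℚ) • consL (c + 1) (sigL 0 x) := by
  have h : (sigL 1).comp (consL c)
      = (consL c).comp (sigL 1) + (c : ℚ) • ((consL (c + 1)).comp (sigL 0)) := by
    apply Finsupp.lhom_ext
    intro t d
    simp [sigma_one_cons, smul_add, Finsupp.smul_single', smul_smul,
      mul_comm, mul_left_comm]
  exact DFunLike.congr_fun h x

lemma sigL_two_consL (c : ℕ) (x : Ical) :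
    sigL 2 (consL c x) = consL c (sigL 2 x) + (c : ℚ) • consL (c + 1) (sigL 1 x)
      + (((c + 1).choose 2 : ℕ) : ℚ) • consL (c + 2) (sigL 0 x) := by
  have h : (sigL 2).comp (consL c)
      = (consL c).comp (sigL 2) + (c : ℚ) • ((consL (c + 1)).comp (sigL 1))
        + (((c + 1).choose 2 : ℕ) : ℚ) • ((consL (c + 2)).comp (sigL 0)) := by
    apply Finsupp.lhom_ext
    intro t d
    simp [sigma_two_cons, smul_add, Finsupp.smul_single', smul_smul,
      mul_comm, mul_left_comm]
  exact DFunLike.congr_fun h x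

/-! ### Basic facts about harmAux -/

lemma harmAux_nil (l : Idx) : harmAux [] l = Finsupp.single l 1 := by
  simp [harmAux]

lemma harmAux_nil_right (k : Idx) : harmAux k [] = Finsupp.single k 1 := by
  cases k <;> simp [harmAux]

lemma harmAux_cons_cons (a b : ℕ) (k l : Idx) :
    harmAux (a :: k) (b :: l)
      = consL a (harmAux k (b :: l)) + consL b (harmAux (a :: k) l)
        + consL (a + b) (harmAux k l) := by
  rw [harmAux]
  simp [consL]

lemma harmAuxL_nil_left (x : Ical) : harmAuxL (Finsupp.single [] 1) x = x := by
  induction x using Finsupp.induction_linear with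
  | zero => simp
  | add f g hf hg => simp [hf, hg]
  | single l d => simp [harmAux_nil, Finsupp.smul_single']

lemma harmAuxL_nil_right (x : Ical) : harmAuxL x (Finsupp.single [] 1) = x := by
  induction x using Finsupp.induction_linear with
  | zero => simp
  | add f g hf hg => simp only [map_add, LinearMap.add_apply, hf, hg]
  | single l d => simp [harmAux_nil_right, Finsupp.smul_single']

lemma harmAuxL_consL_consL (a b : ℕ) (x y : Ical) :
    harmAuxL (consL a x) (consL b y)
      = consL a (harmAuxL x (consL b y)) + consL b (harmAuxL (consL a x) y)
        + consL (a + b) (harmAuxL x y) := by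
  induction x using Finsupp.induction_linear with
  | zero => simp
  | add f g hf hg =>
      simp only [map_add, LinearMap.add_apply, hf, hg]
      abel
  | single k c =>
      induction y using Finsupp.induction_linear with
      | zero => simp
      | add f g hf hg =>
          simp only [map_add, hf, hg]
          abel
      | single l d =>
          simp only [consL_single, harmAuxL_single, harmAux_cons_cons, smul_add, map_add,
            map_smul]

/-! ### The key compatibility of σ with the harmonic product (n = 0, 1, 2) -/

lemma key0 (k l : Idx) :
    sigL 0 (harmAux k l) = harmAuxL (sigma 0 k) (sigma 0 l) := by
  simp [sigL_zero]

theorem key1 (k l : Idx) :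
    sigL 1 (harmAux k l)
      = harmAuxL (sigma 0 k) (sigma 1 l) + harmAuxL (sigma 1 k) (sigma 0 l) := by
  match k, l with
  | [], l =>
      simp [harmAux_nil, sigma_nil, harmAuxL_nil_left]
  | a :: k, [] =>
      simp [harmAux_nil_right, sigma_nil, harmAuxL_nil_right]
  | a :: k, b :: l =>
      rw [harmAux_cons_cons, map_add, map_add, sigL_one_consL, sigL_one_consL,
        sigL_one_consL, key1 k (b :: l), key1 (a :: k) l, key1 k l,
        key0 k (b :: l), key0 (a :: k) l, key0 k l,
        sigma_one_cons a k, sigma_one_cons b l, sigma_zero_cons a k, sigma_zero_cons b l]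
      simp only [map_add, map_smul, LinearMap.add_apply, LinearMap.smul_apply, smul_add,
        harmAuxL_consL_consL]
      push_cast
      ring_nf
      module
termination_by k.length + l.length

lemma choose_two_succ (m : ℕ) : (m + 1).choose 2 = m.choose 2 + m := by
  have h := Nat.choose_succ_succ m 1
  simp only [Nat.choose_one_right, Nat.succ_eq_add_one] at h
  norm_num at h
  omega

lemma choose_two_add (a b : ℕ) :
    (a + b + 1).choose 2 = (a + 1).choose 2 + a * b + (b + 1).choose 2 := by
  induction b with
  | zero => simp
  | succ b ih =>
      rw [show a + (b + 1) + 1 = (a + b + 1) + 1 from by omega,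
        choose_two_succ (a + b + 1), ih,
        show a * (b + 1) = a * b + a from by ring,
        show b + 1 + 1 = (b + 1) + 1 from rfl, choose_two_succ (b + 1)]
      generalize a * b = x
      omega

lemma choose_two_add_q (a b : ℕ) :
    (((a + b + 1).choose 2 : ℕ) : ℚ)
      = (((a + 1).choose 2 : ℕ) : ℚ) + (a : ℚ) * (b : ℚ) + (((b + 1).choose 2 : ℕ) : ℚ) := by
  exact_mod_cast congrArg (Nat.cast (R := ℚ)) (choose_two_add a b)

theorem key2 (k l : Idx) :
    sigL 2 (harmAux k l)
      = harmAuxL (sigma 0 k) (sigma 2 l) + harmAuxL (sigma 1 k) (sigma 1 l)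
        + harmAuxL (sigma 2 k) (sigma 0 l) := by
  match k, l with
  | [], l =>
      simp [harmAux_nil, sigma_nil, harmAuxL_nil_left]
  | a :: k, [] =>
      simp [harmAux_nil_right, sigma_nil, harmAuxL_nil_right]
  | a :: k, b :: l =>
      rw [harmAux_cons_cons, map_add, map_add, sigL_two_consL, sigL_two_consL,
        sigL_two_consL, key2 k (b :: l), key2 (a :: k) l, key2 k l,
        key1 k (b :: l), key1 (a :: k) l, key1 k l,
        key0 k (b :: l), key0 (a :: k) l, key0 k l,
        choose_two_add_q a b,
        sigma_two_cons a k, sigma_two_cons b l, sigma_one_cons a k, sigma_one_cons b l,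
        sigma_zero_cons a k, sigma_zero_cons b l]
      simp only [map_add, map_smul, LinearMap.add_apply, LinearMap.smul_apply, smul_add,
        add_smul, harmAuxL_consL_consL]
      push_cast
      ring_nf
      module
termination_by k.length + l.length

/-! ### Reversal compatibility -/

lemma consL_snocL (d c : ℕ) (x : Ical) : consL d (snocL c x) = snocL c (consL d x) := by
  induction x using Finsupp.induction_linear with
  | zero => simp
  | add f g hf hg => simp [hf, hg]
  | single t e => simp

lemma revL_consL (c : ℕ) (x : Ical) : revL (consL c x) = snocL c (revL x) := by
  induction x using Finsupp.induction_linear with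
  | zero => simp
  | add f g hf hg => simp [hf, hg]
  | single t e => simp

lemma sum_triangle_swap {M : Type*} [AddCommMonoid M] (n : ℕ) (f : ℕ → ℕ → M) :
    ∑ i ∈ Finset.range (n + 1), ∑ j ∈ Finset.range (n - i + 1), f i j
      = ∑ j ∈ Finset.range (n + 1), ∑ i ∈ Finset.range (n - j + 1), f i j := by
  rw [Finset.sum_sigma', Finset.sum_sigma']
  exact Finset.sum_nbij' (fun p => ⟨p.2, p.1⟩) (fun p => ⟨p.2, p.1⟩)
    (by intro p hp; simp only [Finset.mem_sigma, Finset.mem_range] at *; omega)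
    (by intro p hp; simp only [Finset.mem_sigma, Finset.mem_range] at *; omega)
    (by intro p _; rfl) (by intro p _; rfl) (by intro p _; rfl)

lemma sigma_single' (c m : ℕ) :
    sigma m [c] = ((c + m - 1).choose m : ℚ) • Finsupp.single [c + m] 1 := by
  rw [sigma_cons]
  rw [Finset.sum_eq_single m]
  · simp
  · intro j hj hjm
    have : ¬ (m - j = 0) := by simp only [Finset.mem_range] at hj; omega
    rw [sigma_nil, if_neg this]
    simp
  · intro hm
    exact absurd (Finset.self_mem_range_succ m) hm

lemma sigma_snoc (t : Idx) : ∀ n c : ℕ,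
    sigma n (t ++ [c])
      = ∑ j ∈ Finset.range (n + 1),
          ((c + j - 1).choose j : ℚ) • snocL (c + j) (sigma (n - j) t) := by
  induction t with
  | nil =>
      intro n c
      simp only [List.nil_append]
      rw [sigma_single', Finset.sum_eq_single n]
      · simp
      · intro j hj hjn
        have : ¬ (n - j = 0) := by simp only [Finset.mem_range] at hj; omega
        rw [sigma_nil, if_neg this]
        simp
      · intro hn
        exact absurd (Finset.self_mem_range_succ n) hn
  | cons d t ih =>
      intro n c
      rw [List.cons_append, sigma_cons]
      simp only [ih]
      simp only [sigma_cons]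
      simp only [map_sum, map_smul, Finset.smul_sum, smul_smul, consL_snocL]
      rw [sum_triangle_swap]
      apply Finset.sum_congr rfl
      intro j hj
      apply Finset.sum_congr rfl
      intro i hi
      rw [mul_comm, show n - i - j = n - j - i from by omega]

lemma sigma_reverse (t : Idx) : ∀ n : ℕ, sigma n t.reverse = revL (sigma n t) := by
  induction t with
  | nil =>
      intro n
      rw [sigma_nil, List.reverse_nil, sigma_nil]
      split <;> simp
  | cons c t ih =>
      intro n
      rw [List.reverse_cons, sigma_snoc, sigma_cons, map_sum]
      apply Finset.sum_congr rfl
      intro j hj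
      rw [map_smul, ih, revL_consL]

lemma sigL_revL (n : ℕ) (x : Ical) : sigL n (revL x) = revL (sigL n x) := by
  have h : (sigL n).comp revL = revL.comp (sigL n) := by
    apply Finsupp.lhom_ext
    intro t d
    simp [sigma_reverse]
  exact DFunLike.congr_fun h x

/-! ### Commutativity -/

theorem harmAux_comm (k l : Idx) : harmAux k l = harmAux l k := by
  match k, l with
  | [], l => rw [harmAux_nil, harmAux_nil_right]
  | a :: k, [] => rw [harmAux_nil, harmAux_nil_right]
  | a :: k, b :: l =>
      rw [harmAux_cons_cons, harmAux_cons_cons, harmAux_comm k (b :: l),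
        harmAux_comm (a :: k) l, harmAux_comm k l, Nat.add_comm a b]
      abel
termination_by k.length + l.length

lemma harm_comm (k l : Idx) : harm k l = harm l k := by
  rw [harm, harm, harmAux_comm]

/-! ### Bridges between the raw definitions and the linear maps -/

lemma harm_eq_rev (k l : Idx) : harm k l = revL (harmAux k.reverse l.reverse) := by
  simp [harm, revL]

lemma harmF_eq (x y : Ical) : harmF x y = harmBL x y := by
  induction x using Finsupp.induction_linear with
  | zero => simp [harmF]
  | add f g hf hg =>
      have hsum : harmF (f + g) y = harmF f y + harmF g y := by
        unfold harmF
        apply Finsupp.sum_add_index'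
        · intro k; simp [Finsupp.sum]
        · intro k c1 c2
          simp [add_mul, add_smul, Finsupp.sum, Finset.sum_add_distrib]
      rw [hsum, hf, hg, map_add, LinearMap.add_apply]
  | single k c =>
      unfold harmF
      rw [Finsupp.sum_single_index (by simp [Finsupp.sum])]
      have hb : harmBL (Finsupp.single k c) y = c • y.sum fun l d => d • harm k l := by
        rw [harmBL, Finsupp.lsum_single, LinearMap.toSpanSingleton_apply,
          LinearMap.smul_apply, Finsupp.lsum_apply]
        simp [Finsupp.sum, LinearMap.toSpanSingleton_apply]
      rw [hb, Finsupp.smul_sum]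
      apply Finsupp.sum_congr
      intro l _
      rw [mul_smul]

lemma sigmaL_eq (n : ℕ) (x : Ical) : sigmaL n x = sigL n x := by
  rw [sigmaL, sigL, Finsupp.lsum_apply]
  apply Finsupp.sum_congr
  intro t _
  rw [LinearMap.toSpanSingleton_apply]

lemma harmBL_comm (x y : Ical) : harmBL x y = harmBL y x := by
  induction x using Finsupp.induction_linear with
  | zero => simp
  | add f g hf hg => simp [hf, hg]
  | single k c =>
      induction y using Finsupp.induction_linear with
      | zero => simp
      | add f g hf hg => simp [hf, hg]
      | single l d => rw [harmBL_single, harmBL_single, harm_comm, smul_comm]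

lemma harmF_comm (x y : Ical) : harmF x y = harmF y x := by
  rw [harmF_eq, harmBL_comm, ← harmF_eq]

lemma harmBL_eq_rev (x y : Ical) : harmBL x y = revL (harmAuxL (revL x) (revL y)) := by
  induction x using Finsupp.induction_linear with
  | zero => simp
  | add f g hf hg => simp [hf, hg]
  | single k c =>
      induction y using Finsupp.induction_linear with
      | zero => simp
      | add f g hf hg =>
          simp only [map_add, LinearMap.add_apply] at *
          rw [hf, hg]
      | single l d =>
          simp [harm_eq_rev]

lemma key2' (k l : Idx) :
    sigL 2 (harm k l)
      = harmF (sigma 0 k) (sigma 2 l) + harmF (sigma 1 k) (sigma 1 l)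
        + harmF (sigma 2 k) (sigma 0 l) := by
  rw [harm_eq_rev, sigL_revL, key2]
  simp only [map_add, sigma_reverse, ← harmBL_eq_rev, ← harmF_eq]

lemma harmF_sigma0 (t u : Idx) : harmF (sigma 0 t) (sigma 0 u) = harm t u := by
  rw [sigma_zero, sigma_zero, harmF_eq]
  simp

/-! ### Reversal of mI -/

lemma mI_reverse (m n : ℕ) (ks : Idx) :
    mI m n ks.reverse = ((-1 : ℚ)) ^ ks.sum • mI n m ks := by
  simp only [mI, List.length_reverse]
  rw [← Finset.sum_range_reflect, Finset.smul_sum]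
  apply Finset.sum_congr rfl
  intro i hi
  have hi' : i ≤ ks.length := by
    simpa [Nat.lt_succ_iff] using hi
  have h1 : ks.reverse.take (ks.length + 1 - 1 - i) = (ks.drop i).reverse := by
    rw [List.take_reverse, show ks.length - (ks.length + 1 - 1 - i) = i from by omega]
  have h2 : ks.reverse.drop (ks.length + 1 - 1 - i) = (ks.take i).reverse := by
    rw [List.drop_reverse, show ks.length - (ks.length + 1 - 1 - i) = i from by omega]
  rw [h1, h2, List.reverse_reverse, List.sum_reverse, harmF_comm, smul_smul]
  have hsum := List.sum_take_add_sum_drop ks i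
  have hpow : (-1 : ℚ) ^ ks.sum * (-1 : ℚ) ^ (ks.drop i).sum
      = (-1 : ℚ) ^ (ks.take i).sum := by
    rw [← pow_add, ← hsum,
      show (ks.take i).sum + (ks.drop i).sum + (ks.drop i).sum
        = (ks.take i).sum + 2 * (ks.drop i).sum from by ring,
      pow_add, pow_mul]
    norm_num
  rw [hpow]

/-! ### The main theorem -/

/-- For an index of even weight:
I₂(k₁,…,k_r) + ₁I₁(k₁,…,k_r) + I₂(k_r,…,k₁) = σ₂(I₀(k₁,…,k_r)). -/
theorem mI_sum_eq_sigma2_I0 (ks : Idx) (hks : ∀ x ∈ ks, 0 < x) (hev : Even ks.sum) :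
    mI 0 2 ks + mI 1 1 ks + mI 0 2 ks.reverse = sigmaL 2 (mI 0 0 ks) := by
  have hrev : mI 0 2 ks.reverse = mI 2 0 ks := by
    rw [mI_reverse, Even.neg_one_pow hev, one_smul]
  rw [hrev, sigmaL_eq]
  simp only [mI]
  rw [map_sum, ← Finset.sum_add_distrib, ← Finset.sum_add_distrib]
  apply Finset.sum_congr rfl
  intro i _
  rw [map_smul, ← smul_add, ← smul_add]
  congr 1
  rw [harmF_sigma0, key2']
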